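/- arXiv:2506.08886 — 2 statements merged into one kernel-verified Lean document; each statement's English description precedes it below -/
import Mathlib

section
/- Let G be a finite graph with loops at all vertices, H = G - uv, and suppose f is an optimal opinion function for G with f(u) = 1 and f(v) = -1 (mixed opinions). Then -2 ≤ γ(G) - γ(H) ≤ 2. -/
open scoped Classical
open Finset

/-- Sum of opinions over the closed neighborhood of `v` (closed since every
vertex has a loop, so `v` itself is counted). -/
noncomputable def nbrSum {V : Type*} [Fintype V] (G : SimpleGraph V) (f : V → ℤ) (v : V) : ℤ :=
  ∑ w ∈ univ.filter (fun w => G.Adj v w ∨ w = v), f w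

/-- `f` is an opinion function: every value is `1` or `-1`. -/
def IsOpinion {V : Type*} (f : V → ℤ) : Prop := ∀ v, f v = 1 ∨ f v = -1

/-- The set of vertices voting 'yes'. -/
noncomputable def yesVoters {V : Type*} [Fintype V] (G : SimpleGraph V) (f : V → ℤ) : Finset V :=
  univ.filter (fun v => 0 < nbrSum G f v)

/-- `f` is strictly majoritarian on `G`: more than `|V|/2` vertices vote 'yes'. -/
def Majoritarian {V : Type*} [Fintype V] (G : SimpleGraph V) (f : V → ℤ) : Prop :=
  Fintype.card V < 2 * (yesVoters G f).card

/-- The strict domination number: minimum of `f(V)` over strictly majoritarian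
opinion functions. -/
noncomputable def gamma {V : Type*} [Fintype V] (G : SimpleGraph V) : ℤ :=
  sInf {t : ℤ | ∃ f : V → ℤ, IsOpinion f ∧ Majoritarian G f ∧ t = ∑ v, f v}

section Aux

variable {V : Type*} [Fintype V]

lemma nbrSum_eq_sum_ite (G : SimpleGraph V) (f : V → ℤ) (v : V) :
    nbrSum G f v = ∑ w, if G.Adj v w ∨ w = v then f w else 0 := by
  rw [nbrSum, sum_filter]

lemma nbrSum_update (G : SimpleGraph V) (g : V → ℤ) (x : V) (c : ℤ) (w : V) :
    nbrSum G (Function.update g x c) w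
      = nbrSum G g w + (if G.Adj w x ∨ x = w then c - g x else 0) := by
  have h : nbrSum G (Function.update g x c) w - nbrSum G g w
      = ∑ y, ((if G.Adj w y ∨ y = w then Function.update g x c y else 0)
              - (if G.Adj w y ∨ y = w then g y else 0)) := by
    rw [Finset.sum_sub_distrib, ← nbrSum_eq_sum_ite, ← nbrSum_eq_sum_ite]
  have h2 : ∀ y, ((if G.Adj w y ∨ y = w then Function.update g x c y else 0)
              - (if G.Adj w y ∨ y = w then g y else 0))
      = if y = x then (if G.Adj w x ∨ x = w then c - g x else 0) else 0 := by
    intro y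
    by_cases hy : y = x
    · subst hy
      by_cases hp : G.Adj w y ∨ y = w <;> simp [hp, Function.update_self]
    · by_cases hp : G.Adj w y ∨ y = w <;> simp [hp, Function.update_of_ne hy, hy]
  rw [Finset.sum_congr rfl (fun y _ => h2 y), Finset.sum_ite_eq' univ x] at h
  simp only [mem_univ, if_true] at h
  linarith

lemma sum_update_eq (g : V → ℤ) (x : V) (c : ℤ) :
    ∑ w, Function.update g x c w = (∑ w, g w) + (c - g x) := by
  rw [Finset.sum_update_of_mem (mem_univ x), Finset.sdiff_singleton_eq_erase]
  have := Finset.add_sum_erase univ g (mem_univ x)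
  linarith

lemma nbrSum_delete (G : SimpleGraph V) (u v : V) (huv : u ≠ v) (hadj : G.Adj u v)
    (g : V → ℤ) (w : V) :
    nbrSum G g w = nbrSum (G.deleteEdges {s(u, v)}) g w
      + (if w = u then g v else if w = v then g u else 0) := by
  set H := G.deleteEdges {s(u, v)} with hH
  have h : nbrSum G g w - nbrSum H g w
      = ∑ x, ((if G.Adj w x ∨ x = w then g x else 0)
              - (if H.Adj w x ∨ x = w then g x else 0)) := by
    rw [Finset.sum_sub_distrib, ← nbrSum_eq_sum_ite]
    congr 1
    convert nbrSum_eq_sum_ite H g w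
  have hHadj : ∀ x, H.Adj w x ↔ G.Adj w x ∧ ¬((w = u ∧ x = v) ∨ (w = v ∧ x = u)) := by
    intro x
    rw [hH, SimpleGraph.deleteEdges_adj]
    simp only [Set.mem_singleton_iff, Sym2.eq_iff]
  have h2 : ∀ x, ((if G.Adj w x ∨ x = w then g x else 0)
              - (if H.Adj w x ∨ x = w then g x else 0))
      = if (w = u ∧ x = v) ∨ (w = v ∧ x = u) then g x else 0 := by
    intro x
    by_cases hQ : (w = u ∧ x = v) ∨ (w = v ∧ x = u)
    · have hGadj : G.Adj w x := by
        rcases hQ with ⟨h1, h2⟩ | ⟨h1, h2⟩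
        · rw [h1, h2]; exact hadj
        · rw [h1, h2]; exact hadj.symm
      have hxw : x ≠ w := by
        rcases hQ with ⟨h1, h2⟩ | ⟨h1, h2⟩
        · rw [h1, h2]; exact fun e => huv e.symm
        · rw [h1, h2]; exact huv
      have hHnot : ¬ H.Adj w x := by
        rw [hHadj x]; exact fun ⟨_, hn⟩ => hn hQ
      simp [hQ, hGadj, hxw, hHnot]
    · have : (H.Adj w x ∨ x = w) ↔ (G.Adj w x ∨ x = w) := by
        rw [hHadj x]
        constructor
        · rintro (⟨h1, _⟩ | h1)
          · exact Or.inl h1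
          · exact Or.inr h1
        · rintro (h1 | h1)
          · exact Or.inl ⟨h1, hQ⟩
          · exact Or.inr h1
      simp [hQ, this]
  rw [Finset.sum_congr rfl (fun x _ => h2 x)] at h
  by_cases hwu : w = u
  · have hwv : w ≠ v := by rw [hwu]; exact huv
    have : ∀ x, ((w = u ∧ x = v) ∨ (w = v ∧ x = u)) ↔ x = v := by
      intro x
      constructor
      · rintro (⟨_, h2⟩ | ⟨h1, _⟩)
        · exact h2
        · exact absurd h1 hwv
      · exact fun h2 => Or.inl ⟨hwu, h2⟩
    rw [Finset.sum_congr rfl (fun x _ => by rw [if_congr (this x) rfl rfl])] at h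
    rw [Finset.sum_ite_eq' univ v] at h
    simp only [mem_univ, if_true] at h
    rw [if_pos hwu]
    linarith
  · by_cases hwv : w = v
    · have : ∀ x, ((w = u ∧ x = v) ∨ (w = v ∧ x = u)) ↔ x = u := by
        intro x
        constructor
        · rintro (⟨h1, _⟩ | ⟨_, h2⟩)
          · exact absurd h1 hwu
          · exact h2
        · exact fun h2 => Or.inr ⟨hwv, h2⟩
      rw [Finset.sum_congr rfl (fun x _ => by rw [if_congr (this x) rfl rfl])] at h
      rw [Finset.sum_ite_eq' univ u] at h
      simp only [mem_univ, if_true] at h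
      rw [if_neg hwu, if_pos hwv]
      linarith
    · have : ∀ x, ¬((w = u ∧ x = v) ∨ (w = v ∧ x = u)) := by
        rintro x (⟨h1, _⟩ | ⟨h1, _⟩)
        · exact hwu h1
        · exact hwv h1
      rw [Finset.sum_congr rfl (fun x _ => by rw [if_neg (this x)]), Finset.sum_const_zero] at h
      rw [if_neg hwu, if_neg hwv]
      linarith

lemma maj_of_nbrSum_le (A B : SimpleGraph V) (g g' : V → ℤ)
    (h : ∀ w, nbrSum A g w ≤ nbrSum B g' w) (hA : Majoritarian A g) :
    Majoritarian B g' := by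
  have hsub : yesVoters A g ⊆ yesVoters B g' := by
    intro w hw
    simp only [yesVoters, mem_filter, mem_univ, true_and] at hw ⊢
    exact lt_of_lt_of_le hw (h w)
  have hc := Finset.card_le_card hsub
  unfold Majoritarian at hA ⊢
  omega

lemma gammaSet_bddBelow (G : SimpleGraph V) :
    BddBelow {t : ℤ | ∃ f : V → ℤ, IsOpinion f ∧ Majoritarian G f ∧ t = ∑ v, f v} := by
  refine ⟨-(Fintype.card V : ℤ), ?_⟩
  rintro t ⟨f, hf, _, rfl⟩
  have : ∀ w ∈ (univ : Finset V), (-1 : ℤ) ≤ f w := by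
    intro w _
    rcases hf w with h | h <;> rw [h] <;> norm_num
  calc -(Fintype.card V : ℤ) = ∑ _w : V, (-1 : ℤ) := by
        simp [Finset.card_univ]
    _ ≤ ∑ w, f w := Finset.sum_le_sum this

end Aux

theorem stmt3 {V : Type*} [Fintype V] [Nonempty V] (G : SimpleGraph V) (u v : V) (f : V → ℤ)
    (huv : u ≠ v) (hadj : G.Adj u v)
    (hf : IsOpinion f) (hmaj : Majoritarian G f) (hopt : ∑ w, f w = gamma G)
    (hu : f u = 1) (hv : f v = -1) :
    -2 ≤ gamma G - gamma (G.deleteEdges {s(u, v)}) ∧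
      gamma G - gamma (G.deleteEdges {s(u, v)}) ≤ 2 := by
  set H := G.deleteEdges {s(u, v)} with hH
  set SH := {t : ℤ | ∃ f : V → ℤ, IsOpinion f ∧ Majoritarian H f ∧ t = ∑ v, f v} with hSH
  set SG := {t : ℤ | ∃ f : V → ℤ, IsOpinion f ∧ Majoritarian G f ∧ t = ∑ v, f v} with hSG
  have hgH : gamma H = sInf SH := rfl
  have hgG : gamma G = sInf SG := rfl
  have hBH : BddBelow SH := gammaSet_bddBelow H
  have hBG : BddBelow SG := gammaSet_bddBelow G
  -- Step 1: γ(H) ≤ γ(G) + 2.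
  have step1 : gamma H ≤ gamma G + 2 := by
    set g := Function.update f v 1 with hg
    have hgop : IsOpinion g := by
      intro w
      by_cases hw : w = v
      · subst hw; left; simp [hg]
      · rw [hg, Function.update_of_ne hw]; exact hf w
    have hkey : ∀ w, nbrSum G f w ≤ nbrSum H g w := by
      intro w
      have h1 := nbrSum_update H f v 1 w
      have h2 := nbrSum_delete G u v huv hadj f w
      rw [← hg] at h1
      rw [← hH] at h2
      rw [hv] at h1 h2
      rw [hu] at h2
      by_cases hwu : w = u
      · have hwv : w ≠ v := by rw [hwu]; exact huv
        rw [if_pos hwu] at h2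
        by_cases hp : H.Adj w v ∨ v = w
        · rw [if_pos hp] at h1; linarith
        · rw [if_neg hp] at h1; linarith
      · rw [if_neg hwu] at h2
        by_cases hwv : w = v
        · rw [if_pos hwv] at h2
          have hp : H.Adj w v ∨ v = w := Or.inr hwv.symm
          rw [if_pos hp] at h1
          linarith
        · rw [if_neg hwv] at h2
          by_cases hp : H.Adj w v ∨ v = w
          · rw [if_pos hp] at h1; linarith
          · rw [if_neg hp] at h1; linarith
    have hgmaj : Majoritarian H g := maj_of_nbrSum_le G H f g hkey hmaj
    have hsum : ∑ w, g w = (∑ w, f w) + 2 := by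
      rw [hg, sum_update_eq, hv]; ring
    have hmem : (∑ w, f w) + 2 ∈ SH := ⟨g, hgop, hgmaj, hsum.symm⟩
    have h' := csInf_le hBH hmem
    rw [hopt] at h'
    rw [hgH]
    exact h'
  -- Step 2: γ(G) ≤ γ(H) + 2.
  have hSHne : SH.Nonempty := by
    obtain ⟨t, ht⟩ : ∃ t, t ∈ SH := by
      -- reuse step 1's witness implicitly: redo construction
      set g := Function.update f v 1 with hg
      have hgop : IsOpinion g := by
        intro w
        by_cases hw : w = v
        · subst hw; left; simp [hg]
        · rw [hg, Function.update_of_ne hw]; exact hf w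
      have hkey : ∀ w, nbrSum G f w ≤ nbrSum H g w := by
        intro w
        have h1 := nbrSum_update H f v 1 w
        have h2 := nbrSum_delete G u v huv hadj f w
        rw [← hg] at h1
        rw [← hH] at h2
        rw [hv] at h1 h2
        rw [hu] at h2
        by_cases hwu : w = u
        · rw [if_pos hwu] at h2
          by_cases hp : H.Adj w v ∨ v = w
          · rw [if_pos hp] at h1; linarith
          · rw [if_neg hp] at h1; linarith
        · rw [if_neg hwu] at h2
          by_cases hwv : w = v
          · rw [if_pos hwv] at h2
            have hp : H.Adj w v ∨ v = w := Or.inr hwv.symm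
            rw [if_pos hp] at h1
            linarith
          · rw [if_neg hwv] at h2
            by_cases hp : H.Adj w v ∨ v = w
            · rw [if_pos hp] at h1; linarith
            · rw [if_neg hp] at h1; linarith
      exact ⟨∑ w, g w, g, hgop, maj_of_nbrSum_le G H f g hkey hmaj, rfl⟩
    exact ⟨t, ht⟩
  have step2 : gamma G ≤ gamma H + 2 := by
    have hmemH : gamma H ∈ SH := by
      rw [hgH]
      exact Int.csInf_mem hSHne hBH
    obtain ⟨g0, hg0op, hg0maj, hg0sum⟩ := hmemH
    -- build g1 on G
    rcases hg0op v with hg0v | hg0v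
    · rcases hg0op u with hg0u | hg0u
      · -- both 1: g0 works on G
        have hkey : ∀ w, nbrSum H g0 w ≤ nbrSum G g0 w := by
          intro w
          have h2 := nbrSum_delete G u v huv hadj g0 w
          rw [← hH, hg0v, hg0u] at h2
          by_cases hwu : w = u
          · rw [if_pos hwu] at h2; linarith
          · rw [if_neg hwu] at h2
            by_cases hwv : w = v
            · rw [if_pos hwv] at h2; linarith
            · rw [if_neg hwv] at h2; linarith
        have hmem : (∑ w, g0 w) ∈ SG :=
          ⟨g0, hg0op, maj_of_nbrSum_le H G g0 g0 hkey hg0maj, rfl⟩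
        have := csInf_le hBG hmem
        rw [hgG]
        rw [← hg0sum] at this
        linarith
      · -- g0 u = -1, g0 v = 1 : flip u
        set g1 := Function.update g0 u 1 with hg1
        have hg1op : IsOpinion g1 := by
          intro w
          by_cases hw : w = u
          · subst hw; left; simp [hg1]
          · rw [hg1, Function.update_of_ne hw]; exact hg0op w
        have hkey : ∀ w, nbrSum H g0 w ≤ nbrSum G g1 w := by
          intro w
          have h1 := nbrSum_update G g0 u 1 w
          have h2 := nbrSum_delete G u v huv hadj g0 w
          rw [← hg1] at h1
          rw [← hH, hg0v, hg0u] at h2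
          rw [hg0u] at h1
          by_cases hwu : w = u
          · rw [if_pos hwu] at h2
            have hp : G.Adj w u ∨ u = w := Or.inr hwu.symm
            rw [if_pos hp] at h1
            linarith
          · rw [if_neg hwu] at h2
            by_cases hwv : w = v
            · rw [if_pos hwv] at h2
              have hp : G.Adj w u ∨ u = w := Or.inl (by rw [hwv]; exact hadj.symm)
              rw [if_pos hp] at h1
              linarith
            · rw [if_neg hwv] at h2
              by_cases hp : G.Adj w u ∨ u = w
              · rw [if_pos hp] at h1; linarith
              · rw [if_neg hp] at h1; linarith
        have hsum : ∑ w, g1 w = (∑ w, g0 w) + 2 := by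
          rw [hg1, sum_update_eq, hg0u]; ring
        have hmem : (∑ w, g0 w) + 2 ∈ SG :=
          ⟨g1, hg1op, maj_of_nbrSum_le H G g0 g1 hkey hg0maj, hsum.symm⟩
        have := csInf_le hBG hmem
        rw [hgG]
        rw [← hg0sum] at this
        linarith
    · -- g0 v = -1 : flip v
      set g1 := Function.update g0 v 1 with hg1
      have hg1op : IsOpinion g1 := by
        intro w
        by_cases hw : w = v
        · subst hw; left; simp [hg1]
        · rw [hg1, Function.update_of_ne hw]; exact hg0op w
      have hg0u1 : (-1 : ℤ) ≤ g0 u := by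
        rcases hg0op u with h | h <;> rw [h] <;> norm_num
      have hkey : ∀ w, nbrSum H g0 w ≤ nbrSum G g1 w := by
        intro w
        have h1 := nbrSum_update G g0 v 1 w
        have h2 := nbrSum_delete G u v huv hadj g0 w
        rw [← hg1] at h1
        rw [← hH, hg0v] at h2
        rw [hg0v] at h1
        by_cases hwu : w = u
        · rw [if_pos hwu] at h2
          have hp : G.Adj w v ∨ v = w := Or.inl (by rw [hwu]; exact hadj)
          rw [if_pos hp] at h1
          linarith
        · rw [if_neg hwu] at h2
          by_cases hwv : w = v
          · rw [if_pos hwv] at h2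
            have hp : G.Adj w v ∨ v = w := Or.inr hwv.symm
            rw [if_pos hp] at h1
            linarith
          · rw [if_neg hwv] at h2
            by_cases hp : G.Adj w v ∨ v = w
            · rw [if_pos hp] at h1; linarith
            · rw [if_neg hp] at h1; linarith
      have hsum : ∑ w, g1 w = (∑ w, g0 w) + 2 := by
        rw [hg1, sum_update_eq, hg0v]; ring
      have hmem : (∑ w, g0 w) + 2 ∈ SG :=
        ⟨g1, hg1op, maj_of_nbrSum_le H G g0 g1 hkey hg0maj, hsum.symm⟩
      have := csInf_le hBG hmem
      rw [hgG]
      rw [← hg0sum] at this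
      linarith
  constructor <;> linarith
end

section
/- Let G be a connected finite graph with loops at all vertices and cyclomatic number k (k = |E| - |V| + 1 counting only non-loop edges), and let T be any spanning tree of G (with loops retained at every vertex). Then γ(T) - 4k ≤ γ(G) ≤ γ(T) + 2k. -/
open scoped Classical
open Finset

section Helpers
set_option linter.unusedSectionVars false
variable {V : Type*} [Fintype V] {G : SimpleGraph V} {u v w x : V} {f g : V → ℤ}

noncomputable def Nb (G : SimpleGraph V) (v : V) : Finset V :=
  univ.filter (fun w => G.Adj v w ∨ w = v)

lemma nbrSum_eq (G : SimpleGraph V) (f : V → ℤ) (v : V) :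
    nbrSum G f v = ∑ w ∈ Nb G v, f w := rfl

lemma mem_Nb : w ∈ Nb G v ↔ (G.Adj v w ∨ w = v) := by simp [Nb]

lemma self_mem_Nb : v ∈ Nb G v := mem_Nb.2 (Or.inr rfl)

lemma adj_mem_Nb (h : G.Adj v w) : w ∈ Nb G v := mem_Nb.2 (Or.inl h)

lemma Nb_del_ne (huv : G.Adj u v) (hw1 : w ≠ u) (hw2 : w ≠ v) :
    Nb (G.deleteEdges {s(u,v)}) w = Nb G w := by
  ext x
  simp only [mem_Nb, SimpleGraph.deleteEdges_adj, Set.mem_singleton_iff, Sym2.eq_iff]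
  constructor
  · tauto
  · rintro (h | h)
    · exact Or.inl ⟨h, by rintro (⟨rfl, rfl⟩ | ⟨rfl, rfl⟩) <;> simp_all⟩
    · exact Or.inr h

lemma not_mem_Nb_del (huv : G.Adj u v) : v ∉ Nb (G.deleteEdges {s(u,v)}) u := by
  simp [mem_Nb, SimpleGraph.deleteEdges_adj, huv.ne']

lemma Nb_del_insert (huv : G.Adj u v) :
    Nb G u = insert v (Nb (G.deleteEdges {s(u,v)}) u) := by
  have hne : u ≠ v := huv.ne
  ext x
  simp only [mem_Nb, SimpleGraph.deleteEdges_adj, Set.mem_singleton_iff, Sym2.eq_iff,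
    Finset.mem_insert]
  constructor
  · rintro (h | h)
    · by_cases hx : x = v
      · exact Or.inl hx
      · exact Or.inr (Or.inl ⟨h, by rintro (⟨-, rfl⟩ | ⟨rfl, rfl⟩) <;> simp_all⟩)
    · exact Or.inr (Or.inr h)
  · rintro (rfl | (h | h))
    · exact Or.inl huv
    · exact Or.inl h.1
    · exact Or.inr h

lemma nbrSum_del (huv : G.Adj u v) (f : V → ℤ) :
    nbrSum G f u = f v + nbrSum (G.deleteEdges {s(u,v)}) f u := by
  rw [nbrSum_eq, nbrSum_eq, Nb_del_insert huv, Finset.sum_insert (not_mem_Nb_del huv)]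

lemma nbrSum_mono (h : ∀ w, f w ≤ g w) (v : V) : nbrSum G f v ≤ nbrSum G g v :=
  Finset.sum_le_sum fun w _ => h w

lemma sum_update_mem {s : Finset V} (hx : x ∈ s) (f : V → ℤ) (c : ℤ) :
    ∑ w ∈ s, Function.update f x c w = (∑ w ∈ s, f w) + (c - f x) := by
  rw [Finset.sum_update_of_mem hx, Finset.sdiff_singleton_eq_erase,
    ← Finset.add_sum_erase _ f hx]
  ring

lemma sum_update_not_mem {s : Finset V} (hx : x ∉ s) (f : V → ℤ) (c : ℤ) :
    ∑ w ∈ s, Function.update f x c w = ∑ w ∈ s, f w :=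
  Finset.sum_congr rfl fun w hw =>
    Function.update_of_ne (by rintro rfl; exact hx hw) _ _

lemma sum_add_improve {s : Finset V} (h : ∀ w ∈ s, f w ≤ g w) (hx : x ∈ s) :
    (∑ w ∈ s, f w) + (g x - f x) ≤ ∑ w ∈ s, g w := by
  rw [← Finset.add_sum_erase _ f hx, ← Finset.add_sum_erase _ g hx]
  have := Finset.sum_le_sum (f := f) (g := g)
    (fun w hw => h w (Finset.mem_of_mem_erase hw)) (s := s.erase x)
  linarith

lemma opinion_le_one (hf : IsOpinion f) (v : V) : f v ≤ 1 := by rcases hf v with h | h <;> omega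

lemma neg_one_le_opinion (hf : IsOpinion f) (v : V) : -1 ≤ f v := by
  rcases hf v with h | h <;> omega

def gammaSet (G : SimpleGraph V) : Set ℤ :=
  {t : ℤ | ∃ f : V → ℤ, IsOpinion f ∧ Majoritarian G f ∧ t = ∑ v, f v}

lemma gamma_eq (G : SimpleGraph V) : gamma G = sInf (gammaSet G) := rfl

lemma bddBelow_gammaSet (G : SimpleGraph V) : BddBelow (gammaSet G) := by
  refine ⟨-(Fintype.card V : ℤ), ?_⟩
  rintro t ⟨f, hf, -, rfl⟩
  have : ∑ v : V, (-1 : ℤ) ≤ ∑ v, f v :=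
    Finset.sum_le_sum fun v _ => neg_one_le_opinion hf v
  simpa [Finset.card_univ] using this

lemma nonempty_gammaSet [Nonempty V] (G : SimpleGraph V) : (gammaSet G).Nonempty := by
  refine ⟨∑ v : V, (1 : ℤ), fun _ => 1, fun v => Or.inl rfl, ?_, rfl⟩
  have hpos : ∀ v : V, 0 < nbrSum G (fun _ => 1) v := by
    intro v
    rw [nbrSum_eq]
    simp only [Finset.sum_const, nsmul_eq_mul, mul_one]
    exact_mod_cast Finset.card_pos.2 ⟨v, self_mem_Nb⟩
  have h1 : yesVoters G (fun _ => 1) = univ :=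
    Finset.filter_eq_self.2 fun v _ => hpos v
  unfold Majoritarian
  rw [h1, Finset.card_univ]
  have : 0 < Fintype.card V := Fintype.card_pos
  omega

lemma gamma_le (G : SimpleGraph V) (hf : IsOpinion f) (hm : Majoritarian G f) :
    gamma G ≤ ∑ v, f v :=
  csInf_le (bddBelow_gammaSet G) ⟨f, hf, hm, rfl⟩

lemma exists_gamma [Nonempty V] (G : SimpleGraph V) :
    ∃ f : V → ℤ, IsOpinion f ∧ Majoritarian G f ∧ gamma G = ∑ v, f v :=
  Int.csInf_mem (nonempty_gammaSet G) (bddBelow_gammaSet G)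

lemma maj_of_subset {G H : SimpleGraph V} (h : yesVoters G f ⊆ yesVoters H g)
    (hm : Majoritarian G f) : Majoritarian H g :=
  lt_of_lt_of_le hm (by exact_mod_cast Nat.mul_le_mul_left 2 (Finset.card_le_card h))

lemma yes_subset {G H : SimpleGraph V}
    (h : ∀ w, 0 < nbrSum G f w → 0 < nbrSum H g w) :
    yesVoters G f ⊆ yesVoters H g := by
  intro w hw
  simp only [yesVoters, Finset.mem_filter, Finset.mem_univ, true_and] at *
  exact h w hw

/-- protection of a single endpoint's vote after edge deletion -/
lemma protect (huv : G.Adj u v) (hf : IsOpinion f) (hfg : ∀ w, f w ≤ g w)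
    (hg1 : ∀ w, g w ≤ 1)
    (hcond : (∃ x ∈ Nb G u, f x = -1 ∧ g x = 1) ∨ (∀ x ∈ Nb G u, f x = 1))
    (hpos : 0 < nbrSum G f u) : 0 < nbrSum (G.deleteEdges {s(u,v)}) g u := by
  have key : nbrSum G g u = g v + nbrSum (G.deleteEdges {s(u,v)}) g u := nbrSum_del huv g
  rcases hcond with ⟨x, hxm, hfx, hgx⟩ | hall
  · have h2 : nbrSum G f u + 2 ≤ nbrSum G g u := by
      have := sum_add_improve (f := f) (g := g) (fun w _ => hfg w) hxm
      rw [← nbrSum_eq, ← nbrSum_eq] at this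
      rw [hfx, hgx] at this
      linarith
    have := hg1 v
    linarith
  · have hcard : nbrSum G f u = ((Nb G u).card : ℤ) := by
      rw [nbrSum_eq, Finset.sum_congr rfl (fun w hw => hall w hw)]
      simp
    have h2 : 2 ≤ ((Nb G u).card : ℤ) := by
      have : 1 < (Nb G u).card :=
        Finset.one_lt_card.2 ⟨v, adj_mem_Nb huv, u, self_mem_Nb, huv.ne'⟩
      omega
    have hmono : nbrSum G f u ≤ nbrSum G g u := nbrSum_mono hfg u
    have := hg1 v
    linarith

end Helpers

section Main
variable {V : Type*} [Fintype V] {G : SimpleGraph V} {u v : V} {f : V → ℤ}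
set_option linter.unusedSectionVars false

lemma deleteEdges_swap (G : SimpleGraph V) (u v : V) :
    G.deleteEdges {s(v,u)} = G.deleteEdges {s(u,v)} := by rw [Sym2.eq_swap]

lemma pick (hf : IsOpinion f) (u : V) :
    ∃ Pu : Finset V, Pu.card ≤ 1 ∧ (∀ w ∈ Pu, f w = -1) ∧
      ((∃ x ∈ Nb G u, x ∈ Pu) ∨ ∀ x ∈ Nb G u, f x = 1) := by
  by_cases h : ∃ x ∈ Nb G u, f x = -1
  · obtain ⟨x, hx, hfx⟩ := h
    exact ⟨{x}, by simp, by simp [hfx], Or.inl ⟨x, hx, by simp⟩⟩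
  · exact ⟨∅, by simp, by simp,
      Or.inr fun x hx => (hf x).resolve_right fun hc => h ⟨x, hx, hc⟩⟩

lemma gamma_del_le [Nonempty V] (huv : G.Adj u v) :
    gamma (G.deleteEdges {s(u,v)}) ≤ gamma G + 4 := by
  obtain ⟨f, hf, hm, hgam⟩ := exists_gamma G
  obtain ⟨Pu, hPuc, hPuf, hcu⟩ := pick (G := G) hf u
  obtain ⟨Pv, hPvc, hPvf, hcv⟩ := pick (G := G) hf v
  set P : Finset V := Pu ∪ Pv with hP
  have hPf : ∀ w ∈ P, f w = -1 := by
    intro w hw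
    rcases Finset.mem_union.1 hw with h | h
    · exact hPuf w h
    · exact hPvf w h
  set g : V → ℤ := fun w => if w ∈ P then 1 else f w with hg
  have hgP : ∀ w ∈ P, g w = 1 := by intro w hw; simp [hg, hw]
  have hfg : ∀ w, f w ≤ g w := by
    intro w
    by_cases h : w ∈ P
    · rw [hgP w h]; exact opinion_le_one hf w
    · simp [hg, h]
  have hg1 : ∀ w, g w ≤ 1 := by
    intro w
    by_cases h : w ∈ P
    · rw [hgP w h]
    · simp only [hg, if_neg h]; exact opinion_le_one hf w
  have hgop : IsOpinion g := by
    intro w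
    by_cases h : w ∈ P
    · exact Or.inl (hgP w h)
    · simp only [hg, if_neg h]; exact hf w
  -- sum bound
  have hsum : ∑ w, g w ≤ (∑ w, f w) + 4 := by
    have h1 : ∀ w, g w ≤ f w + (if w ∈ P then 2 else 0) := by
      intro w
      by_cases h : w ∈ P
      · rw [hgP w h, hPf w h]; simp [h]
      · simp [hg, h]
    have h2 : ∑ w, g w ≤ ∑ w, (f w + (if w ∈ P then 2 else 0)) :=
      Finset.sum_le_sum fun w _ => h1 w
    have h3 : ∑ w : V, (if w ∈ P then (2:ℤ) else 0) = 2 * P.card := by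
      rw [Finset.sum_ite_mem, Finset.univ_inter, Finset.sum_const]
      simp [mul_comm]
    have h4 : (P.card : ℤ) ≤ 2 := by
      have h5 : P.card ≤ Pu.card + Pv.card := by
        rw [hP]; exact Finset.card_union_le Pu Pv
      have h6 : P.card ≤ 2 := by omega
      exact_mod_cast h6
    rw [Finset.sum_add_distrib, h3] at h2
    linarith
  -- majoritarian
  have hmaj : Majoritarian (G.deleteEdges {s(u,v)}) g := by
    refine maj_of_subset (yes_subset ?_) hm
    intro w hpos
    by_cases hwu : w = u
    · subst hwu
      refine protect huv hf hfg hg1 ?_ hpos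
      rcases hcu with ⟨x, hxm, hxP⟩ | hall
      · exact Or.inl ⟨x, hxm, hPf x (Finset.mem_union_left _ hxP),
          hgP x (Finset.mem_union_left _ hxP)⟩
      · exact Or.inr hall
    by_cases hwv : w = v
    · subst hwv
      rw [← deleteEdges_swap]
      refine protect huv.symm hf hfg hg1 ?_ hpos
      rcases hcv with ⟨x, hxm, hxP⟩ | hall
      · exact Or.inl ⟨x, hxm, hPf x (Finset.mem_union_right _ hxP),
          hgP x (Finset.mem_union_right _ hxP)⟩
      · exact Or.inr hall
    · have heq : nbrSum (G.deleteEdges {s(u,v)}) g w = nbrSum G g w := by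
        rw [nbrSum_eq, nbrSum_eq, Nb_del_ne huv hwu hwv]
      rw [heq]
      exact lt_of_lt_of_le hpos (nbrSum_mono hfg w)
  calc gamma (G.deleteEdges {s(u,v)}) ≤ ∑ w, g w := gamma_le _ hgop hmaj
    _ ≤ (∑ w, f w) + 4 := hsum
    _ = gamma G + 4 := by rw [hgam]

lemma add2_core [Nonempty V] (huv : G.Adj u v) (hf : IsOpinion f)
    (hm : Majoritarian (G.deleteEdges {s(u,v)}) f) (hfu : f u = -1) :
    gamma G ≤ (∑ w, f w) + 2 := by
  set g := Function.update f u 1 with hg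
  have hgu : g u = 1 := Function.update_self _ _ _
  have hgne : ∀ w, w ≠ u → g w = f w := fun w hw => Function.update_of_ne hw _ _
  have hgop : IsOpinion g := by
    intro w
    by_cases h : w = u
    · subst h; exact Or.inl hgu
    · rw [hgne w h]; exact hf w
  have hfg : ∀ w, f w ≤ g w := by
    intro w
    by_cases h : w = u
    · subst h; rw [hgu]; exact opinion_le_one hf w
    · rw [hgne w h]
  have hsum : ∑ w, g w = (∑ w, f w) + 2 := by
    rw [hg, sum_update_mem (Finset.mem_univ u) f 1, hfu]; ring
  have hmaj : Majoritarian G g := by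
    refine maj_of_subset (yes_subset ?_) hm
    intro w hpos
    by_cases hwu : w = u
    · rw [hwu] at hpos ⊢
      rw [nbrSum_del huv g]
      have h1 : nbrSum (G.deleteEdges {s(u,v)}) g u
          = nbrSum (G.deleteEdges {s(u,v)}) f u + 2 := by
        rw [hg, nbrSum_eq, nbrSum_eq, sum_update_mem self_mem_Nb f 1, hfu]; ring
      have h2 : g v = f v := hgne v huv.ne'
      have h3 := neg_one_le_opinion hf v
      rw [h1, h2]
      linarith
    by_cases hwv : w = v
    · rw [hwv] at hpos ⊢
      have hrw : nbrSum G g v = g u + nbrSum (G.deleteEdges {s(v,u)}) g v :=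
        nbrSum_del huv.symm g
      rw [deleteEdges_swap] at hrw
      have hnm : u ∉ Nb (G.deleteEdges {s(u,v)}) v := by
        rw [← deleteEdges_swap]; exact not_mem_Nb_del huv.symm
      have h1 : nbrSum (G.deleteEdges {s(u,v)}) g v
          = nbrSum (G.deleteEdges {s(u,v)}) f v := by
        rw [hg, nbrSum_eq, nbrSum_eq, sum_update_not_mem hnm f 1]
      rw [hrw, hgu, h1]
      linarith
    · have heq : nbrSum (G.deleteEdges {s(u,v)}) g w
          = nbrSum (G.deleteEdges {s(u,v)}) f w + (if u ∈ Nb (G.deleteEdges {s(u,v)}) w then 1 - f u else 0) := by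
        by_cases h : u ∈ Nb (G.deleteEdges {s(u,v)}) w
        · rw [hg, nbrSum_eq, nbrSum_eq, sum_update_mem h f 1, if_pos h]
        · rw [hg, nbrSum_eq, nbrSum_eq, sum_update_not_mem h f 1, if_neg h]; ring
      have h2 : nbrSum G g w = nbrSum (G.deleteEdges {s(u,v)}) g w := by
        rw [nbrSum_eq, nbrSum_eq, Nb_del_ne huv hwu hwv]
      rw [h2, heq, hfu]
      split_ifs <;> linarith
  calc gamma G ≤ ∑ w, g w := gamma_le _ hgop hmaj
    _ = (∑ w, f w) + 2 := hsum

lemma gamma_le_del [Nonempty V] (huv : G.Adj u v) :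
    gamma G ≤ gamma (G.deleteEdges {s(u,v)}) + 2 := by
  obtain ⟨f, hf, hm, hgam⟩ := exists_gamma (G.deleteEdges {s(u,v)})
  rcases hf u with hfu | hfu
  · rcases hf v with hfv | hfv
    · -- both endpoints 1 : f itself works on G
      have hmaj : Majoritarian G f := by
        refine maj_of_subset (yes_subset ?_) hm
        intro w hpos
        by_cases hwu : w = u
        · subst hwu; rw [nbrSum_del huv f, hfv]; linarith
        by_cases hwv : w = v
        · rw [hwv] at hpos ⊢
          have hrw : nbrSum G f v = f u + nbrSum (G.deleteEdges {s(v,u)}) f v :=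
            nbrSum_del huv.symm f
          rw [deleteEdges_swap] at hrw
          rw [hrw, hfu]; linarith
        · have heq : nbrSum G f w = nbrSum (G.deleteEdges {s(u,v)}) f w := by
            rw [nbrSum_eq, nbrSum_eq, Nb_del_ne huv hwu hwv]
          rw [heq]; exact hpos
      have := gamma_le G hf hmaj
      linarith [hgam.ge]
    · -- f v = -1, flip v
      have hm' : Majoritarian (G.deleteEdges {s(v,u)}) f := by
        rw [deleteEdges_swap]; exact hm
      have := add2_core huv.symm hf hm' hfv
      linarith [hgam.ge]
  · have := add2_core huv hf hm hfu
    linarith [hgam.ge]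

end Main

section Chain
variable {V : Type*} [Fintype V]
set_option linter.unusedSectionVars false

lemma chain [Nonempty V] (k : ℕ) (T : SimpleGraph V) :
    ∀ G : SimpleGraph V, T ≤ G →
      G.edgeFinset.card = T.edgeFinset.card + k →
      gamma T - 4 * (k : ℤ) ≤ gamma G ∧ gamma G ≤ gamma T + 2 * (k : ℤ) := by
  induction k with
  | zero =>
    intro G hle hcard
    have hsub : T.edgeFinset ⊆ G.edgeFinset := SimpleGraph.edgeFinset_mono hle
    have heq : T.edgeFinset = G.edgeFinset :=
      Finset.eq_of_subset_of_card_le hsub (by omega)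
    have hTG : T = G := SimpleGraph.edgeFinset_inj.1 heq
    subst hTG
    simp
  | succ k ih =>
    intro G hle hcard
    have hns : ¬ G.edgeFinset ⊆ T.edgeFinset := by
      intro h
      have := Finset.card_le_card h
      omega
    obtain ⟨e, heG, heT⟩ := Finset.not_subset.1 hns
    revert heG heT
    induction e using Sym2.ind with
    | _ u v =>
    intro heG heT
    have huv : G.Adj u v := SimpleGraph.mem_edgeFinset.1 heG
    have hTH : T ≤ G.deleteEdges {s(u,v)} := by
      intro a b hab
      rw [SimpleGraph.deleteEdges_adj]
      refine ⟨hle hab, ?_⟩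
      simp only [Set.mem_singleton_iff]
      intro hc
      apply heT
      rw [SimpleGraph.mem_edgeFinset, ← hc]
      exact hab
    have hHe : (G.deleteEdges {s(u,v)}).edgeFinset = G.edgeFinset \ {s(u,v)} := by
      ext a
      simp only [SimpleGraph.mem_edgeFinset, SimpleGraph.edgeSet_deleteEdges,
        Set.mem_diff, Set.mem_singleton_iff, Finset.mem_sdiff, Finset.mem_singleton]
    have hHcard : (G.deleteEdges {s(u,v)}).edgeFinset.card = G.edgeFinset.card - 1 := by
      rw [hHe, Finset.card_sdiff_of_subset (Finset.singleton_subset_iff.2 heG), Finset.card_singleton]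
    have hpos : 1 ≤ G.edgeFinset.card := Finset.card_pos.2 ⟨_, heG⟩
    obtain ⟨h1, h2⟩ := ih (G.deleteEdges {s(u,v)}) hTH (by convert hHcard.trans (by omega : G.edgeFinset.card - 1 = T.edgeFinset.card + k))
    have h3 := gamma_del_le (G := G) huv
    have h4 := gamma_le_del (G := G) huv
    constructor <;> push_cast <;> linarith

end Chain

theorem stmt5 {V : Type*} [Fintype V] [Nonempty V] (G T : SimpleGraph V) (k : ℕ)
    (hG : G.Connected) (hle : T ≤ G) (hT : T.IsTree)
    (hk : (k : ℤ) = G.edgeFinset.card - Fintype.card V + 1) :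
    gamma T - 4 * k ≤ gamma G ∧ gamma G ≤ gamma T + 2 * k := by
  have htc : T.edgeFinset.card + 1 = Fintype.card V := hT.card_edgeFinset
  have hcard : G.edgeFinset.card = T.edgeFinset.card + k := by omega
  exact chain k T G hle hcard
end
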